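/- arXiv:1008.3217 — 2 statements merged into one kernel-verified Lean document; each statement's English description precedes it below -/
import Mathlib

section
/- For any natural number m, there exists an m-connected graph G such that γ'_s(G) ≤ −(m/6)·|V(G)|. In particular, Xu's conjecture that every 2-connected graph G of order n ≥ 2 satisfies γ'_s(G) ≥ 1 is false. -/
open scoped Classical

noncomputable def edgeFin {V : Type*} [Fintype V] (G : SimpleGraph V) : Finset (Sym2 V) :=
  Finset.univ.filter (· ∈ G.edgeSet)

noncomputable def closedNbhd {V : Type*} [Fintype V] (G : SimpleGraph V) (e : Sym2 V) :
    Finset (Sym2 V) :=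
  (edgeFin G).filter (fun e' => ∃ v, v ∈ e ∧ v ∈ e')

def IsSEDF {V : Type*} [Fintype V] (G : SimpleGraph V) (f : Sym2 V → ℤ) : Prop :=
  (∀ e ∈ edgeFin G, f e = 1 ∨ f e = -1) ∧
  ∀ e ∈ edgeFin G, 1 ≤ ∑ e' ∈ closedNbhd G e, f e'

noncomputable def vsum {V : Type*} [Fintype V] (G : SimpleGraph V) (f : Sym2 V → ℤ) (v : V) : ℤ :=
  ∑ e ∈ (edgeFin G).filter (fun e => v ∈ e), f e

noncomputable def gammaS {V : Type*} [Fintype V] (G : SimpleGraph V) : ℤ :=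
  sInf {z : ℤ | ∃ f, IsSEDF G f ∧ z = ∑ e ∈ edgeFin G, f e}

def IsLGraph {V : Type*} [Fintype V] (m n : ℕ) (G : SimpleGraph V) : Prop :=
  Fintype.card V = (n + 1) * (m * n + m + 1) ∧
  ∃ P : Fin (n + 1) → Finset V,
    (∀ v : V, ∃! i, v ∈ P i) ∧
    (∀ i, (P i).card = m * n + m + 1) ∧
    (∀ u ∈ P 0, ∀ v ∈ P 0, u ≠ v → G.Adj u v) ∧
    (∀ i, i ≠ 0 → ∀ u ∈ P i, ∀ v ∈ P i, ¬ G.Adj u v) ∧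
    (∀ i, i ≠ 0 → ∀ v ∈ P i, ((P 0).filter (G.Adj v)).card = m) ∧
    (∀ i, i ≠ 0 → ∀ v ∈ P 0, ((P i).filter (G.Adj v)).card = m) ∧
    (∀ i j, i ≠ 0 → j ≠ 0 → i ≠ j → ∀ u ∈ P i, ∀ v ∈ P j, ¬ G.Adj u v)

def MConnected {V : Type*} [Fintype V] (m : ℕ) (G : SimpleGraph V) : Prop :=
  m < Fintype.card V ∧
  ∀ S : Finset V, S.card < m → (G.induce ((↑S : Set V)ᶜ)).Connected

def IsElementary {V : Type*} (H : SimpleGraph V) : Prop :=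
  (∀ v, (H.neighborSet v).ncard ≤ 2) ∧
  ∀ v, (H.neighborSet v).ncard = 1 → ∀ w, H.Adj v w → (H.neighborSet w).ncard = 1

-- generic lemmas
section Generic
variable {V : Type*} [Fintype V] (G : SimpleGraph V)

lemma gammaS_le (f : Sym2 V → ℤ) (hf : IsSEDF G f) :
    gammaS G ≤ ∑ e ∈ edgeFin G, f e := by
  apply csInf_le
  · refine ⟨-(edgeFin G).card, ?_⟩
    rintro z ⟨g, hg, rfl⟩
    have : ∀ e ∈ edgeFin G, (-1 : ℤ) ≤ g e := by
      intro e he; rcases hg.1 e he with h | h <;> omega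
    calc (-(edgeFin G).card : ℤ) = ∑ _e ∈ edgeFin G, (-1 : ℤ) := by simp
    _ ≤ _ := Finset.sum_le_sum this
  · exact ⟨f, hf, rfl⟩

lemma mem_edgeFin {e : Sym2 V} : e ∈ edgeFin G ↔ e ∈ G.edgeSet := by
  simp [edgeFin]

lemma incident_eq_image (v : V) :
    (edgeFin G).filter (fun e => v ∈ e) = (G.neighborFinset v).image (fun w => s(v, w)) := by
  classical
  ext e
  simp only [Finset.mem_filter, mem_edgeFin, Finset.mem_image, SimpleGraph.mem_neighborFinset]
  constructor
  · rintro ⟨he, hv⟩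
    refine ⟨Sym2.Mem.other' hv, ?_, Sym2.other_spec' hv⟩
    have := Sym2.other_spec' hv
    rw [← this] at he
    exact he
  · rintro ⟨w, hw, rfl⟩
    exact ⟨hw, Sym2.mem_mk_left _ _⟩

lemma sum_incident (f : Sym2 V → ℤ) (v : V) :
    ∑ e ∈ (edgeFin G).filter (fun e => v ∈ e), f e
      = ∑ w ∈ G.neighborFinset v, f s(v, w) := by
  rw [incident_eq_image, Finset.sum_image]
  intro a _ b _ h
  exact Sym2.congr_right.mp h

lemma closedNbhd_eq (a b : V) (hab : G.Adj a b) :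
    closedNbhd G s(a, b)
      = (edgeFin G).filter (fun e => a ∈ e) ∪ (edgeFin G).filter (fun e => b ∈ e) := by
  ext e
  simp only [closedNbhd, Finset.mem_filter, Finset.mem_union, Sym2.mem_iff]
  constructor
  · rintro ⟨he, v, (rfl | rfl), hv⟩
    · exact Or.inl ⟨he, hv⟩
    · exact Or.inr ⟨he, hv⟩
  · rintro (⟨he, hv⟩ | ⟨he, hv⟩)
    · exact ⟨he, a, Or.inl rfl, hv⟩
    · exact ⟨he, b, Or.inr rfl, hv⟩

lemma inter_incident (a b : V) (hab : G.Adj a b) :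
    (edgeFin G).filter (fun e => a ∈ e) ∩ (edgeFin G).filter (fun e => b ∈ e) = {s(a, b)} := by
  ext e
  simp only [Finset.mem_inter, Finset.mem_filter, Finset.mem_singleton, mem_edgeFin]
  constructor
  · rintro ⟨⟨he, ha⟩, ⟨_, hb⟩⟩
    exact (Sym2.mem_and_mem_iff hab.ne).mp ⟨ha, hb⟩
  · rintro rfl
    exact ⟨⟨hab, Sym2.mem_mk_left a b⟩, hab, Sym2.mem_mk_right a b⟩

lemma sum_closedNbhd (f : Sym2 V → ℤ) (a b : V) (hab : G.Adj a b) :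
    ∑ e ∈ closedNbhd G s(a, b), f e
      = (∑ e ∈ (edgeFin G).filter (fun e => a ∈ e), f e)
        + (∑ e ∈ (edgeFin G).filter (fun e => b ∈ e), f e) - f s(a, b) := by
  have h := Finset.sum_union_inter (s₁ := (edgeFin G).filter (fun e => a ∈ e))
    (s₂ := (edgeFin G).filter (fun e => b ∈ e)) (f := f)
  rw [inter_incident G a b hab, Finset.sum_singleton] at h
  rw [closedNbhd_eq G a b hab]
  omega

lemma card_filter_mem {e : Sym2 V} (he : e ∈ G.edgeSet) :
    (Finset.univ.filter (· ∈ e)).card = 2 := by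
  revert he
  induction e using Sym2.ind with
  | _ a b =>
    intro he
    have hab : a ≠ b := ((SimpleGraph.mem_edgeSet G).mp he).ne
    have : Finset.univ.filter (· ∈ s(a, b)) = {a, b} := by
      ext v; simp [Sym2.mem_iff]
    rw [this, Finset.card_insert_of_notMem (by simp [hab]), Finset.card_singleton]

lemma two_mul_sum_edges (f : Sym2 V → ℤ) :
    2 * ∑ e ∈ edgeFin G, f e
      = ∑ v : V, ∑ e ∈ (edgeFin G).filter (fun e => v ∈ e), f e := by
  calc 2 * ∑ e ∈ edgeFin G, f e = ∑ e ∈ edgeFin G, 2 * f e := by rw [Finset.mul_sum]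
  _ = ∑ e ∈ edgeFin G, ∑ v : V, if v ∈ e then f e else 0 := by
      refine Finset.sum_congr rfl fun e he => ?_
      rw [← Finset.sum_filter, Finset.sum_const, card_filter_mem G (mem_edgeFin G |>.mp he)]
      simp [two_smul]
  _ = ∑ v : V, ∑ e ∈ edgeFin G, if v ∈ e then f e else 0 := Finset.sum_comm
  _ = _ := by
      refine Finset.sum_congr rfl fun v _ => ?_
      rw [Finset.sum_filter]

end Generic

lemma two_mul_sum_edges' {V : Type*} [Fintype V] (G : SimpleGraph V) (f : Sym2 V → ℤ) :
    2 * ∑ e ∈ edgeFin G, f e = ∑ v : V, ∑ w ∈ G.neighborFinset v, f s(v, w) := by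
  rw [two_mul_sum_edges]
  exact Finset.sum_congr rfl fun v _ => sum_incident G f v

-- transfer along an equivalence
section Transfer
variable {V W : Type*} [Fintype V] [Fintype W] (ε : W ≃ V) (G : SimpleGraph V)

lemma sym2_roundtrip (e : Sym2 W) : Sym2.map ε.symm (Sym2.map ε e) = e := by
  rw [Sym2.map_map]
  simp

lemma sym2_roundtrip' (e : Sym2 V) : Sym2.map ε (Sym2.map ε.symm e) = e := by
  rw [Sym2.map_map]
  simp

lemma mem_map_equiv {v : W} {e : Sym2 W} : ε v ∈ Sym2.map ε e ↔ v ∈ e := by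
  induction e using Sym2.ind with
  | _ a b => simp [Sym2.mem_iff, ε.injective.eq_iff]

lemma mem_edgeFin_comap {e : Sym2 W} :
    e ∈ edgeFin (G.comap ε) ↔ Sym2.map ε e ∈ edgeFin G := by
  induction e using Sym2.ind with
  | _ a b => simp [mem_edgeFin, SimpleGraph.mem_edgeSet]

lemma mem_closedNbhd_comap {e' e0 : Sym2 W} :
    e' ∈ closedNbhd (G.comap ε) e0 ↔ Sym2.map ε e' ∈ closedNbhd G (Sym2.map ε e0) := by
  simp only [closedNbhd, Finset.mem_filter, mem_edgeFin_comap]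
  constructor
  · rintro ⟨he, v, hv1, hv2⟩
    exact ⟨he, ε v, (mem_map_equiv ε).mpr hv1, (mem_map_equiv ε).mpr hv2⟩
  · rintro ⟨he, v, hv1, hv2⟩
    obtain ⟨w, hw, rfl⟩ := Sym2.mem_map.mp hv1
    exact ⟨he, w, hw, (mem_map_equiv ε).mp hv2⟩

lemma sum_edgeFin_comap (f : Sym2 V → ℤ) :
    ∑ e ∈ edgeFin (G.comap ε), f (Sym2.map ε e) = ∑ e ∈ edgeFin G, f e := by
  refine Finset.sum_nbij' (Sym2.map ε) (Sym2.map ε.symm) ?_ ?_ ?_ ?_ ?_ <;> intro a ha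
  · exact (mem_edgeFin_comap ε G).mp ha
  · rw [mem_edgeFin_comap, sym2_roundtrip']; exact ha
  · exact sym2_roundtrip ε a
  · exact sym2_roundtrip' ε a
  · rfl

lemma sum_closedNbhd_comap (f : Sym2 V → ℤ) (e0 : Sym2 W) :
    ∑ e ∈ closedNbhd (G.comap ε) e0, f (Sym2.map ε e)
      = ∑ e ∈ closedNbhd G (Sym2.map ε e0), f e := by
  refine Finset.sum_nbij' (Sym2.map ε) (Sym2.map ε.symm) ?_ ?_ ?_ ?_ ?_ <;> intro a ha
  · exact (mem_closedNbhd_comap ε G).mp ha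
  · rw [mem_closedNbhd_comap, sym2_roundtrip']; exact ha
  · exact sym2_roundtrip ε a
  · exact sym2_roundtrip' ε a
  · rfl

lemma isSEDF_comap (f : Sym2 V → ℤ) (hf : IsSEDF G f) :
    IsSEDF (G.comap ε) (fun e => f (Sym2.map ε e)) := by
  constructor
  · intro e he
    exact hf.1 _ ((mem_edgeFin_comap ε G).mp he)
  · intro e he
    rw [sum_closedNbhd_comap]
    exact hf.2 _ ((mem_edgeFin_comap ε G).mp he)

lemma gammaS_comap_le (f : Sym2 V → ℤ) (hf : IsSEDF G f) :
    gammaS (G.comap ε) ≤ ∑ e ∈ edgeFin G, f e := by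
  have := gammaS_le (G.comap ε) _ (isSEDF_comap ε G f hf)
  rwa [sum_edgeFin_comap] at this

end Transfer

-- the concrete graph
section Concrete
variable (m : ℕ)

def Hg : SimpleGraph (Fin 5 × Fin 6 × Fin m) where
  Adj u v := u ≠ v ∧ (u.1 = 0 ∨ v.1 = 0) ∧ (u.1 = 0 ∧ v.1 = 0 ∨ u.2.1 = v.2.1)
  symm := by
    constructor
    rintro u v ⟨h1, h2, h3⟩
    refine ⟨h1.symm, h2.symm, ?_⟩
    rcases h3 with ⟨ha, hb⟩ | h
    · exact Or.inl ⟨hb, ha⟩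
    · exact Or.inr h.symm
  loopless := ⟨fun u h => h.1 rfl⟩

noncomputable def fT : Sym2 (Fin 5 × Fin 6 × Fin m) → ℤ :=
  Sym2.lift ⟨fun a b => if a.1 = 0 ∧ b.1 = 0 then 1 else -1, by
    intro a b; simp [and_comm]⟩

lemma fT_mk (a b : Fin 5 × Fin 6 × Fin m) :
    fT m s(a, b) = if a.1 = 0 ∧ b.1 = 0 then 1 else -1 := rfl

lemma hg_adj {u v : Fin 5 × Fin 6 × Fin m} :
    (Hg m).Adj u v ↔ u ≠ v ∧ (u.1 = 0 ∨ v.1 = 0) ∧ (u.1 = 0 ∧ v.1 = 0 ∨ u.2.1 = v.2.1) :=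
  Iff.rfl

lemma card_cross_nbrs (c : Fin 6) :
    (Finset.univ.filter (fun w : Fin 5 × Fin 6 × Fin m => w.1 = 0 ∧ w.2.1 = c)).card = m := by
  have : (Finset.univ.filter (fun w : Fin 5 × Fin 6 × Fin m => w.1 = 0 ∧ w.2.1 = c))
      = ({(0 : Fin 5)} : Finset (Fin 5)) ×ˢ (({c} : Finset (Fin 6)) ×ˢ Finset.univ) := by
    ext w
    simp only [Finset.mem_filter, Finset.mem_univ, true_and, Finset.mem_product,
      Finset.mem_singleton]
    tauto
  rw [this, Finset.card_product, Finset.card_product, Finset.card_singleton,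
    Finset.card_singleton, Finset.card_univ, Fintype.card_fin]
  omega

lemma card_clique : 
    (Finset.univ.filter (fun w : Fin 5 × Fin 6 × Fin m => w.1 = 0)).card = 6 * m := by
  have : (Finset.univ.filter (fun w : Fin 5 × Fin 6 × Fin m => w.1 = 0))
      = ({(0 : Fin 5)} : Finset (Fin 5)) ×ˢ (Finset.univ : Finset (Fin 6 × Fin m)) := by
    ext w
    simp only [Finset.mem_filter, Finset.mem_univ, true_and, Finset.mem_product,
      Finset.mem_singleton, and_true]
  rw [this, Finset.card_product, Finset.card_singleton, Finset.card_univ, Fintype.card_prod,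
    Fintype.card_fin, Fintype.card_fin]
  omega

lemma card_cross_of_clique (c : Fin 6) :
    (Finset.univ.filter (fun w : Fin 5 × Fin 6 × Fin m => w.1 ≠ 0 ∧ w.2.1 = c)).card = 4 * m := by
  have : (Finset.univ.filter (fun w : Fin 5 × Fin 6 × Fin m => w.1 ≠ 0 ∧ w.2.1 = c))
      = (Finset.univ.filter (fun p : Fin 5 => p ≠ 0)) ×ˢ (({c} : Finset (Fin 6)) ×ˢ Finset.univ) := by
    ext w
    simp only [Finset.mem_filter, Finset.mem_univ, true_and, Finset.mem_product,
      Finset.mem_singleton]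
    tauto
  have h4 : (Finset.univ.filter (fun p : Fin 5 => p ≠ 0)).card = 4 := by decide
  rw [this, Finset.card_product, Finset.card_product, Finset.card_singleton,
    Finset.card_univ, Fintype.card_fin, h4]
  omega

lemma nbhd_cross (v : Fin 5 × Fin 6 × Fin m) (hv : v.1 ≠ 0) :
    (Hg m).neighborFinset v
      = Finset.univ.filter (fun w => w.1 = 0 ∧ w.2.1 = v.2.1) := by
  ext w
  simp only [SimpleGraph.mem_neighborFinset, hg_adj, Finset.mem_filter, Finset.mem_univ,
    true_and]
  constructor
  · rintro ⟨h1, h2, h3⟩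
    rcases h2 with h2 | h2
    · exact absurd h2 hv
    · refine ⟨h2, ?_⟩
      rcases h3 with ⟨ha, _⟩ | h3
      · exact absurd ha hv
      · exact h3.symm
  · rintro ⟨h1, h2⟩
    refine ⟨?_, Or.inr h1, Or.inr h2.symm⟩
    intro h
    rw [h] at hv
    exact hv h1

lemma nbhd_clique (v : Fin 5 × Fin 6 × Fin m) (hv : v.1 = 0) :
    (Hg m).neighborFinset v
      = (Finset.univ.filter (fun w : Fin 5 × Fin 6 × Fin m => w.1 = 0)).erase v
        ∪ Finset.univ.filter (fun w => w.1 ≠ 0 ∧ w.2.1 = v.2.1) := by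
  ext w
  simp only [SimpleGraph.mem_neighborFinset, hg_adj, Finset.mem_union, Finset.mem_erase,
    Finset.mem_filter, Finset.mem_univ, true_and]
  constructor
  · rintro ⟨h1, _, h3⟩
    by_cases hw : w.1 = 0
    · exact Or.inl ⟨Ne.symm h1, hw⟩
    · refine Or.inr ⟨hw, ?_⟩
      rcases h3 with ⟨_, hb⟩ | h3
      · exact absurd hb hw
      · exact h3.symm
  · rintro (⟨h1, h2⟩ | ⟨h1, h2⟩)
    · exact ⟨Ne.symm h1, Or.inl hv, Or.inl ⟨hv, h2⟩⟩
    · refine ⟨?_, Or.inl hv, Or.inr h2.symm⟩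
      intro h
      rw [← h] at h1
      exact h1 hv

lemma incsum_cross (v : Fin 5 × Fin 6 × Fin m) (hv : v.1 ≠ 0) :
    ∑ w ∈ (Hg m).neighborFinset v, fT m s(v, w) = -(m : ℤ) := by
  rw [nbhd_cross m v hv]
  have : ∀ w ∈ Finset.univ.filter (fun w : Fin 5 × Fin 6 × Fin m => w.1 = 0 ∧ w.2.1 = v.2.1),
      fT m s(v, w) = -1 := by
    intro w _
    rw [fT_mk, if_neg]
    rintro ⟨h, _⟩
    exact hv h
  rw [Finset.sum_congr rfl this, Finset.sum_const, card_cross_nbrs]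
  simp

lemma incsum_clique (hm : 1 ≤ m) (v : Fin 5 × Fin 6 × Fin m) (hv : v.1 = 0) :
    ∑ w ∈ (Hg m).neighborFinset v, fT m s(v, w) = 2 * (m : ℤ) - 1 := by
  rw [nbhd_clique m v hv]
  have hdisj : Disjoint
      ((Finset.univ.filter (fun w : Fin 5 × Fin 6 × Fin m => w.1 = 0)).erase v)
      (Finset.univ.filter (fun w : Fin 5 × Fin 6 × Fin m => w.1 ≠ 0 ∧ w.2.1 = v.2.1)) := by
    rw [Finset.disjoint_left]
    intro w hw hw'
    simp only [Finset.mem_erase, Finset.mem_filter] at hw hw'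
    exact hw'.2.1 hw.2.2
  rw [Finset.sum_union hdisj]
  have h1 : ∀ w ∈ (Finset.univ.filter (fun w : Fin 5 × Fin 6 × Fin m => w.1 = 0)).erase v,
      fT m s(v, w) = 1 := by
    intro w hw
    simp only [Finset.mem_erase, Finset.mem_filter] at hw
    rw [fT_mk, if_pos ⟨hv, hw.2.2⟩]
  have h2 : ∀ w ∈ Finset.univ.filter (fun w : Fin 5 × Fin 6 × Fin m => w.1 ≠ 0 ∧ w.2.1 = v.2.1),
      fT m s(v, w) = -1 := by
    intro w hw
    simp only [Finset.mem_filter] at hw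
    rw [fT_mk, if_neg]
    rintro ⟨_, h⟩
    exact hw.2.1 h
  rw [Finset.sum_congr rfl h1, Finset.sum_congr rfl h2, Finset.sum_const, Finset.sum_const]
  rw [Finset.card_erase_of_mem (Finset.mem_filter.mpr ⟨Finset.mem_univ v, hv⟩), card_clique, card_cross_of_clique]
  simp only [nsmul_eq_mul, mul_one, mul_neg_one]
  omega

end Concrete

section Concrete2
variable (m : ℕ)

lemma fT_pm (e : Sym2 (Fin 5 × Fin 6 × Fin m)) : fT m e = 1 ∨ fT m e = -1 := by
  induction e using Sym2.ind with
  | _ a b =>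
    rw [fT_mk]
    split
    · exact Or.inl rfl
    · exact Or.inr rfl

lemma sedf (hm : 1 ≤ m) : IsSEDF (Hg m) (fT m) := by
  constructor
  · exact fun e _ => fT_pm m e
  · intro e
    induction e using Sym2.ind with
    | _ a b =>
      intro he
      have hab : (Hg m).Adj a b := (SimpleGraph.mem_edgeSet (Hg m)).mp ((mem_edgeFin _).mp he)
      rw [sum_closedNbhd (Hg m) (fT m) a b hab, sum_incident, sum_incident, fT_mk]
      rcases hab.2.1 with ha | hb
      · by_cases hb : b.1 = 0
        · rw [incsum_clique m hm a ha, incsum_clique m hm b hb, if_pos ⟨ha, hb⟩]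
          omega
        · rw [incsum_clique m hm a ha, incsum_cross m b hb, if_neg (fun h => hb h.2)]
          omega
      · by_cases ha : a.1 = 0
        · rw [incsum_clique m hm a ha, incsum_clique m hm b hb, if_pos ⟨ha, hb⟩]
          omega
        · rw [incsum_cross m a ha, incsum_clique m hm b hb, if_neg (fun h => ha h.1)]
          omega

lemma total_sum (hm : 1 ≤ m) :
    ∑ e ∈ edgeFin (Hg m), fT m e = -(6 * (m : ℤ) * m + 3 * m) := by
  have h2 := two_mul_sum_edges' (Hg m) (fT m)
  have hv : ∀ v : Fin 5 × Fin 6 × Fin m,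
      ∑ w ∈ (Hg m).neighborFinset v, fT m s(v, w)
        = if v.1 = 0 then 2 * (m : ℤ) - 1 else -(m : ℤ) := by
    intro v
    by_cases hv0 : v.1 = 0
    · rw [if_pos hv0, incsum_clique m hm v hv0]
    · rw [if_neg hv0, incsum_cross m v hv0]
  rw [Finset.sum_congr rfl (fun v _ => hv v)] at h2
  rw [Finset.sum_ite, Finset.sum_const, Finset.sum_const, card_clique] at h2
  have hc : (Finset.univ.filter (fun v : Fin 5 × Fin 6 × Fin m => ¬ v.1 = 0)).card = 24 * m := by
    have h1 : (Finset.univ.filter (fun v : Fin 5 × Fin 6 × Fin m => ¬ v.1 = 0))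
        = (Finset.univ.filter (fun p : Fin 5 => p ≠ 0)) ×ˢ (Finset.univ : Finset (Fin 6 × Fin m)) := by
      ext w
      simp only [Finset.mem_filter, Finset.mem_univ, true_and, Finset.mem_product, and_true]
    have h4 : (Finset.univ.filter (fun p : Fin 5 => p ≠ 0)).card = 4 := by decide
    rw [h1, Finset.card_product, h4, Finset.card_univ, Fintype.card_prod, Fintype.card_fin,
      Fintype.card_fin]
    omega
  rw [hc] at h2
  simp only [nsmul_eq_mul] at h2
  push_cast at h2
  nlinarith [h2]

end Concrete2

section Main
variable (m : ℕ)

noncomputable def epsm : Fin (30 * m) ≃ Fin 5 × Fin 6 × Fin m :=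
  Fintype.equivOfCardEq (by simp only [Fintype.card_fin, Fintype.card_prod]; ring)

noncomputable def Gm : SimpleGraph (Fin (30 * m)) := (Hg m).comap (epsm m)

lemma mconn (hm : 1 ≤ m) : MConnected m (Gm m) := by
  constructor
  · simp only [Fintype.card_fin]
    omega
  · intro S hS
    rw [SimpleGraph.connected_iff]
    have pick : ∀ c : Fin 6, ∃ j : Fin m, (epsm m).symm (0, c, j) ∉ S := by
      intro c
      by_contra h
      push_neg at h
      have hinj : Function.Injective (fun j : Fin m => (epsm m).symm (0, c, j)) := by
        intro j j' hjj
        have := (epsm m).symm.injective hjj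
        exact (Prod.ext_iff.mp (Prod.ext_iff.mp this).2).2
      have hsub : Finset.univ.image (fun j : Fin m => (epsm m).symm (0, c, j)) ⊆ S := by
        intro w hw
        obtain ⟨j, _, rfl⟩ := Finset.mem_image.mp hw
        exact h j
      have hcard := Finset.card_le_card hsub
      rw [Finset.card_image_of_injective _ hinj, Finset.card_univ, Fintype.card_fin] at hcard
      omega
    constructor
    · -- preconnected
      have key : ∀ x : ↑((↑S : Set (Fin (30 * m)))ᶜ),
          ∃ y : ↑((↑S : Set (Fin (30 * m)))ᶜ),
            (epsm m y.val).1 = 0 ∧ ((Gm m).induce ((↑S : Set (Fin (30 * m)))ᶜ)).Reachable x y := by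
        intro x
        by_cases hx : (epsm m x.val).1 = 0
        · exact ⟨x, hx, SimpleGraph.Reachable.refl x⟩
        · obtain ⟨j, hj⟩ := pick (epsm m x.val).2.1
          refine ⟨⟨(epsm m).symm (0, (epsm m x.val).2.1, j), hj⟩, by simp, ?_⟩
          apply SimpleGraph.Adj.reachable
          show (Hg m).Adj (epsm m x.val) (epsm m ((epsm m).symm (0, (epsm m x.val).2.1, j)))
          rw [Equiv.apply_symm_apply]
          refine ⟨?_, Or.inr rfl, Or.inr rfl⟩
          intro h
          apply hx
          rw [h]
      intro x y
      obtain ⟨x', hx'0, hxr⟩ := key x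
      obtain ⟨y', hy'0, hyr⟩ := key y
      refine hxr.trans (SimpleGraph.Reachable.trans ?_ hyr.symm)
      by_cases hxy : x' = y'
      · rw [hxy]
      · apply SimpleGraph.Adj.reachable
        show (Hg m).Adj (epsm m x'.val) (epsm m y'.val)
        refine ⟨?_, Or.inl hx'0, Or.inl ⟨hx'0, hy'0⟩⟩
        intro h
        exact hxy (Subtype.ext ((epsm m).injective h))
    · -- nonempty
      obtain ⟨j, hj⟩ := pick 0
      exact ⟨⟨(epsm m).symm (0, 0, j), hj⟩⟩

lemma gammaS_bot_fin1 : gammaS (⊥ : SimpleGraph (Fin 1)) = 0 := by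
  have he : edgeFin (⊥ : SimpleGraph (Fin 1)) = ∅ := by
    ext e
    simp [edgeFin]
  have hset : {z : ℤ | ∃ f, IsSEDF (⊥ : SimpleGraph (Fin 1)) f
      ∧ z = ∑ e ∈ edgeFin (⊥ : SimpleGraph (Fin 1)), f e} = {0} := by
    ext z
    simp only [Set.mem_setOf_eq, Set.mem_singleton_iff]
    constructor
    · rintro ⟨f, _, rfl⟩
      rw [he, Finset.sum_empty]
    · rintro rfl
      refine ⟨fun _ => 1, ⟨?_, ?_⟩, by rw [he, Finset.sum_empty]⟩ <;>
        simp [he]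
  rw [gammaS, hset, csInf_singleton]

end Main

theorem stmt6 :
    (∀ m : ℕ, ∃ (k : ℕ) (G : SimpleGraph (Fin k)), MConnected m G ∧
      (gammaS G : ℚ) ≤ -((m : ℚ) / 6) * k) ∧
    ¬ (∀ (k : ℕ) (G : SimpleGraph (Fin k)), 2 ≤ k → MConnected 2 G → 1 ≤ gammaS G) := by
  have part1 : ∀ m : ℕ, ∃ (k : ℕ) (G : SimpleGraph (Fin k)), MConnected m G ∧
      (gammaS G : ℚ) ≤ -((m : ℚ) / 6) * k := by
    intro m
    rcases Nat.eq_zero_or_pos m with rfl | hm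
    · refine ⟨1, ⊥, ⟨by norm_num, fun S hS => absurd hS (Nat.not_lt_zero _)⟩, ?_⟩
      rw [gammaS_bot_fin1]
      norm_num
    · refine ⟨30 * m, Gm m, mconn m hm, ?_⟩
      have h1 : gammaS (Gm m) ≤ -(6 * (m : ℤ) * m + 3 * m) := by
        have h := gammaS_comap_le (epsm m) (Hg m) (fT m) (sedf m hm)
        rw [total_sum m hm] at h
        exact h
      have h2 : (gammaS (Gm m) : ℚ) ≤ -(6 * (m : ℚ) * m + 3 * m) := by exact_mod_cast h1
      have h3 : (0 : ℚ) ≤ (m : ℚ) := Nat.cast_nonneg m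
      have h4 : -(6 * (m : ℚ) * m + 3 * m) ≤ -((m : ℚ) / 6) * ((30 * m : ℕ) : ℚ) := by
        push_cast
        nlinarith
      linarith
  refine ⟨part1, ?_⟩
  intro hall
  obtain ⟨k, G, hc, hb⟩ := part1 2
  have hk : 2 < k := by
    have := hc.1
    simpa using this
  have h1 : 1 ≤ gammaS G := hall k G (by omega) hc
  have h2 : (1 : ℚ) ≤ (gammaS G : ℚ) := by exact_mod_cast h1
  have h3 : (3 : ℚ) ≤ (k : ℚ) := by exact_mod_cast hk
  push_cast at hb
  nlinarith
end

section
/- Let G be a graph of order n. Then γ'_s(G) ≥ −n²/16. -/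
open scoped Classical

lemma mem_edgeFin_iff {V : Type*} [Fintype V] (G : SimpleGraph V) (e : Sym2 V) :
    e ∈ edgeFin G ↔ e ∈ G.edgeSet := by
  simp [edgeFin]

lemma card_filter_mem_sym2 {V : Type*} [Fintype V] (e : Sym2 V) (h : ¬ e.IsDiag) :
    (Finset.univ.filter (fun v => v ∈ e)).card = 2 := by
  induction e with
  | _ a b =>
    rw [Sym2.isDiag_iff_proj_eq] at h
    have h2 : Finset.univ.filter (fun v => v ∈ s(a, b)) = {a, b} := by
      ext v; simp [Sym2.mem_iff]
    rw [h2, Finset.card_pair h]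

lemma sum_vsum_eq {V : Type*} [Fintype V] (G : SimpleGraph V) (f : Sym2 V → ℤ) :
    ∑ v, vsum G f v = 2 * ∑ e ∈ edgeFin G, f e := by
  unfold vsum
  calc ∑ v, ∑ e ∈ (edgeFin G).filter (fun e => v ∈ e), f e
      = ∑ v : V, ∑ e ∈ edgeFin G, if v ∈ e then f e else 0 := by
        simp [Finset.sum_filter]
    _ = ∑ e ∈ edgeFin G, ∑ v : V, if v ∈ e then f e else 0 := Finset.sum_comm
    _ = ∑ e ∈ edgeFin G, 2 * f e := by
        apply Finset.sum_congr rfl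
        intro e he
        rw [← Finset.sum_filter, Finset.sum_const, nsmul_eq_mul,
          card_filter_mem_sym2 e (G.not_isDiag_of_mem_edgeSet ((mem_edgeFin_iff G e).mp he))]
        norm_num
    _ = 2 * ∑ e ∈ edgeFin G, f e := by rw [Finset.mul_sum]

lemma closedNbhd_sum {V : Type*} [Fintype V] (G : SimpleGraph V) (f : Sym2 V → ℤ)
    {u v : V} (huv : u ≠ v) (he : s(u, v) ∈ edgeFin G) :
    ∑ e' ∈ closedNbhd G s(u, v), f e' = vsum G f u + vsum G f v - f s(u, v) := by
  have h1 : closedNbhd G s(u, v) =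
      (edgeFin G).filter (fun e' => u ∈ e') ∪ (edgeFin G).filter (fun e' => v ∈ e') := by
    unfold closedNbhd
    rw [← Finset.filter_or]
    apply Finset.filter_congr
    intro e' _
    simp only [Sym2.mem_iff]
    constructor
    · rintro ⟨w, (rfl | rfl), hw⟩
      · exact Or.inl hw
      · exact Or.inr hw
    · rintro (hw | hw)
      · exact ⟨u, Or.inl rfl, hw⟩
      · exact ⟨v, Or.inr rfl, hw⟩
  have h2 : (edgeFin G).filter (fun e' => u ∈ e') ∩ (edgeFin G).filter (fun e' => v ∈ e')
      = {s(u, v)} := by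
    ext e'
    simp only [Finset.mem_inter, Finset.mem_filter, Finset.mem_singleton]
    constructor
    · rintro ⟨⟨_, hu⟩, ⟨_, hv⟩⟩
      exact (Sym2.mem_and_mem_iff huv).mp ⟨hu, hv⟩
    · rintro rfl
      exact ⟨⟨he, Sym2.mem_mk_left u v⟩, ⟨he, Sym2.mem_mk_right u v⟩⟩
  have h3 := Finset.sum_union_inter (s₁ := (edgeFin G).filter (fun e' => u ∈ e'))
    (s₂ := (edgeFin G).filter (fun e' => v ∈ e')) (f := f)
  rw [← h1, h2, Finset.sum_singleton] at h3
  unfold vsum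
  linarith

lemma card_incident_eq {V : Type*} [Fintype V] (G : SimpleGraph V) (v : V) :
    ((edgeFin G).filter (fun e => v ∈ e)).card
      = (Finset.univ.filter (G.Adj v)).card := by
  classical
  have h1 : (edgeFin G).filter (fun e => v ∈ e) = G.incidenceFinset v := by
    ext e
    simp [edgeFin, SimpleGraph.mem_incidenceFinset, SimpleGraph.incidenceSet]
  have h2 : Finset.univ.filter (G.Adj v) = G.neighborFinset v := by
    ext u; simp
  rw [h1, h2, SimpleGraph.card_incidenceFinset_eq_degree,
    SimpleGraph.card_neighborFinset_eq_degree]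

lemma key_bound {V : Type*} [Fintype V] (G : SimpleGraph V) (f : Sym2 V → ℤ)
    (hf : IsSEDF G f) :
    -((Fintype.card V : ℤ) ^ 2) ≤ 16 * ∑ e ∈ edgeFin G, f e := by
  obtain ⟨hf1, hf2⟩ := hf
  set n : ℤ := (Fintype.card V : ℤ) with hn
  have hn0 : 0 ≤ n := by positivity
  have hfb : ∀ e ∈ edgeFin G, -1 ≤ f e ∧ f e ≤ 1 := by
    intro e he; rcases hf1 e he with h | h <;> omega
  have hsum : ∑ v, vsum G f v = 2 * ∑ e ∈ edgeFin G, f e := sum_vsum_eq G f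
  by_cases hV : Nonempty V
  swap
  · have huniv : (Finset.univ : Finset V) = ∅ := by
      simp [Finset.univ_eq_empty_iff.mpr (not_nonempty_iff.mp hV)]
    rw [huniv, Finset.sum_empty] at hsum
    nlinarith [sq_nonneg n]
  obtain ⟨v0, -, hv0⟩ := Finset.exists_min_image Finset.univ (vsum G f)
    ⟨Classical.arbitrary V, Finset.mem_univ _⟩
  by_cases hneg : 0 ≤ vsum G f v0
  · have h0 : 0 ≤ ∑ v, vsum G f v :=
      Finset.sum_nonneg fun v _ => le_trans hneg (hv0 v (Finset.mem_univ v))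
    nlinarith [sq_nonneg n]
  · push_neg at hneg
    set M : ℤ := -vsum G f v0 with hM
    have hM1 : 1 ≤ M := by omega
    set N : Finset V := Finset.univ.filter (G.Adj v0) with hNdef
    -- M ≤ N.card
    have hMN : M ≤ (N.card : ℤ) := by
      have h1 : -vsum G f v0 ≤ (((edgeFin G).filter (fun e => v0 ∈ e)).card : ℤ) := by
        unfold vsum
        rw [← Finset.sum_neg_distrib]
        calc ∑ e ∈ (edgeFin G).filter (fun e => v0 ∈ e), -f e
            ≤ ∑ e ∈ (edgeFin G).filter (fun e => v0 ∈ e), (1 : ℤ) := by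
              apply Finset.sum_le_sum
              intro e he
              have := (hfb e (Finset.mem_filter.mp he).1).1
              omega
          _ = (((edgeFin G).filter (fun e => v0 ∈ e)).card : ℤ) := by simp
      rw [card_incident_eq G v0, ← hNdef] at h1
      omega
    -- neighbors have vsum ≥ M
    have hNd : ∀ u ∈ N, M ≤ vsum G f u := by
      intro u hu
      have hadj : G.Adj v0 u := by simpa [hNdef] using hu
      have hne : v0 ≠ u := hadj.ne
      have hem : s(v0, u) ∈ edgeFin G := by
        rw [mem_edgeFin_iff, SimpleGraph.mem_edgeSet]; exact hadj
      have h2 := hf2 _ hem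
      rw [closedNbhd_sum G f hne hem] at h2
      have h3 := (hfb _ hem).1
      omega
    have hall : ∀ v : V, -M ≤ vsum G f v := by
      intro v
      have := hv0 v (Finset.mem_univ v)
      omega
    have hsplit : ∑ v ∈ Finset.univ \ N, vsum G f v + ∑ v ∈ N, vsum G f v
        = ∑ v, vsum G f v := Finset.sum_sdiff (Finset.subset_univ N)
    have hNb : (N.card : ℤ) * M ≤ ∑ v ∈ N, vsum G f v := by
      calc (N.card : ℤ) * M = ∑ _v ∈ N, M := by rw [Finset.sum_const]; push_cast; ring
        _ ≤ ∑ v ∈ N, vsum G f v := Finset.sum_le_sum hNd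
    have hrest : ((Finset.univ \ N).card : ℤ) * (-M) ≤ ∑ v ∈ Finset.univ \ N, vsum G f v := by
      calc ((Finset.univ \ N).card : ℤ) * (-M) = ∑ _v ∈ Finset.univ \ N, (-M) := by
            rw [Finset.sum_const]; push_cast; ring
        _ ≤ _ := Finset.sum_le_sum fun v _ => hall v
    have hcard : ((Finset.univ \ N).card : ℤ) = n - N.card := by
      rw [Finset.card_sdiff_of_subset (Finset.subset_univ N)]
      have := Finset.card_le_univ N
      push_cast [Finset.card_univ]
      omega
    have hNn : (N.card : ℤ) ≤ n := by
      have := Finset.card_le_univ N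
      rw [hn]; exact_mod_cast this
    rw [hcard] at hrest
    nlinarith [sq_nonneg (4 * M - n), hsum, hsplit]

theorem stmt8 {V : Type*} [Fintype V] (G : SimpleGraph V) :
    -((Fintype.card V : ℚ) ^ 2) / 16 ≤ (gammaS G : ℚ) := by
  set S : Set ℤ := {z : ℤ | ∃ f, IsSEDF G f ∧ z = ∑ e ∈ edgeFin G, f e} with hS
  have hone : IsSEDF G (fun _ => 1) := by
    refine ⟨fun e _ => Or.inl rfl, fun e he => ?_⟩
    have hmem : e ∈ closedNbhd G e := by
      unfold closedNbhd
      rw [Finset.mem_filter]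
      exact ⟨he, e.out.1, Sym2.out_fst_mem e, Sym2.out_fst_mem e⟩
    have hpos : 0 < (closedNbhd G e).card := Finset.card_pos.mpr ⟨e, hmem⟩
    simp only [Finset.sum_const, nsmul_eq_mul, mul_one]
    exact_mod_cast hpos
  have hne : S.Nonempty := ⟨∑ e ∈ edgeFin G, (1 : ℤ), fun _ => 1, hone, rfl⟩
  have hbdd : BddBelow S := by
    refine ⟨-((Fintype.card V : ℤ) ^ 2), ?_⟩
    rintro z ⟨f, hf, rfl⟩
    have := key_bound G f hf
    have h2 : (0 : ℤ) ≤ (Fintype.card V : ℤ) ^ 2 := by positivity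
    omega
  have hmem := Int.csInf_mem hne hbdd
  obtain ⟨f, hf, hz⟩ := hmem
  have := key_bound G f hf
  rw [← hz] at this
  unfold gammaS
  rw [← hS]
  have hcast : -((Fintype.card V : ℚ) ^ 2) ≤ 16 * ((sInf S : ℤ) : ℚ) := by
    exact_mod_cast this
  linarith
end
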